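/- Let B_n(x) be the type B Eulerian polynomials (B_0 = 1, B_{n+1}(x) = (2nx + 1 + x)B_n(x) + 2x(1-x)B_n'(x)) and F_n(x) the alternating run polynomials of dual Stirling permutations (F_0 = 1, F_{n+1}(x) = (x+2nx²)F_n(x) + x(1-x²)F_n'(x)). Then for all n ≥ 0: F_{n+1}(x) = x B_n(x²) + n x F_n(x) − Σ_{r=2}^{n} C(n, r-2) F_{n-r+2}(−x) F_{r-1}(x). -/

import Mathlib

open Polynomial

lemma perterm (F : ℕ → Polynomial ℝ)
    (hFrec : ∀ n : ℕ, F (n + 1) =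
      (X + 2 * (n : Polynomial ℝ) * X ^ 2) * F n + X * (1 - X ^ 2) * derivative (F n))
    (m j : ℕ) :
    (F m).comp (-X) * F (j+1) + (F (m+1)).comp (-X) * F j
      = 2*((m:Polynomial ℝ)+(j:Polynomial ℝ))*X^2 * ((F m).comp (-X) * F j)
        + X*(1-X^2) * derivative ((F m).comp (-X) * F j) := by
  rw [hFrec j, hFrec m]
  simp only [derivative_mul, derivative_comp, add_comp, mul_comp, X_comp, one_comp,
    sub_comp, pow_comp, natCast_comp, ofNat_comp, derivative_neg, derivative_X]
  ring

lemma key (B : ℕ → Polynomial ℝ) (hB0 : B 0 = 1)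
    (hBrec : ∀ n : ℕ, B (n + 1) =
      (2 * (n : Polynomial ℝ) * X + 1 + X) * B n + 2 * X * (1 - X) * derivative (B n))
    (F : ℕ → Polynomial ℝ) (hF0 : F 0 = 1)
    (hFrec : ∀ n : ℕ, F (n + 1) =
      (X + 2 * (n : Polynomial ℝ) * X ^ 2) * F n + X * (1 - X ^ 2) * derivative (F n))
    (n : ℕ) :
    ∑ k ∈ Finset.range (n+1), (n.choose k : Polynomial ℝ) * (F (n-k)).comp (-X) * F (k+1)
      = X * (B n).comp (X^2) := by
  induction n with
  | zero =>
      have hF1 : F 1 = X := by rw [hFrec 0, hF0]; simp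
      simp [hF0, hF1, hB0]
  | succ n ih =>
      have step1 : ∑ k ∈ Finset.range (n+1+1),
          ((n+1).choose k : Polynomial ℝ) * (F (n+1-k)).comp (-X) * F (k+1)
          = ∑ k ∈ Finset.range (n+1), (n.choose k : Polynomial ℝ) *
              ((F (n-k)).comp (-X) * F (k+2) + (F (n+1-k)).comp (-X) * F (k+1)) := by
        rw [Finset.sum_range_succ']
        have e1 : ∀ k ∈ Finset.range (n+1),
            ((n+1).choose (k+1) : Polynomial ℝ) * (F (n+1-(k+1))).comp (-X) * F (k+1+1)
            = (n.choose k : Polynomial ℝ) * (F (n-k)).comp (-X) * F (k+2)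
              + (n.choose (k+1) : Polynomial ℝ) * (F (n-k)).comp (-X) * F (k+2) := by
          intro k _
          rw [Nat.choose_succ_succ]
          push_cast [Nat.succ_eq_add_one, Nat.succ_sub_succ]
          ring
        rw [Finset.sum_congr rfl e1, Finset.sum_add_distrib]
        have e2 : ∑ k ∈ Finset.range (n+1),
            (n.choose (k+1) : Polynomial ℝ) * (F (n-k)).comp (-X) * F (k+2)
            + ((n+1).choose 0 : Polynomial ℝ) * (F (n+1-0)).comp (-X) * F (0+1)
            = ∑ k ∈ Finset.range (n+1),
              (n.choose k : Polynomial ℝ) * (F (n+1-k)).comp (-X) * F (k+1) := by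
          rw [Finset.sum_range_succ' (fun k => (n.choose k : Polynomial ℝ) * (F (n+1-k)).comp (-X) * F (k+1))]
          rw [Finset.sum_range_succ]
          simp only [Nat.choose_self, Nat.choose_succ_self, Nat.cast_zero, Nat.choose_zero_right,
            Nat.cast_one]
          have : ∀ k ∈ Finset.range n, (n.choose (k+1) : Polynomial ℝ) * (F (n-k)).comp (-X) * F (k+2)
              = (n.choose (k+1) : Polynomial ℝ) * (F (n+1-(k+1))).comp (-X) * F (k+1+1) := by
            intro k _; norm_num [Nat.succ_sub_succ]
          rw [Finset.sum_congr rfl this]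
          ring
        rw [add_assoc, e2, ← Finset.sum_add_distrib]
        apply Finset.sum_congr rfl
        intro k _; ring
      rw [step1]
      have step2 : ∀ k ∈ Finset.range (n+1),
          (n.choose k : Polynomial ℝ) *
            ((F (n-k)).comp (-X) * F (k+2) + (F (n+1-k)).comp (-X) * F (k+1))
          = 2*((n:Polynomial ℝ)+1)*X^2 * ((n.choose k : Polynomial ℝ) * (F (n-k)).comp (-X) * F (k+1))
            + X*(1-X^2) * derivative ((n.choose k : Polynomial ℝ) * (F (n-k)).comp (-X) * F (k+1)) := by
        intro k hk
        have hk' : k ≤ n := by simpa using Nat.lt_succ_iff.mp (Finset.mem_range.mp hk)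
        have hnk : n + 1 - k = (n - k) + 1 := by omega
        rw [hnk, perterm F hFrec (n-k) (k+1)]
        have hc : ((n-k : ℕ) : Polynomial ℝ) + ((k+1 : ℕ) : Polynomial ℝ) = (n : Polynomial ℝ) + 1 := by
          have h : (n - k) + (k + 1) = n + 1 := by omega
          calc ((n-k : ℕ) : Polynomial ℝ) + ((k+1 : ℕ) : Polynomial ℝ)
              = (((n-k) + (k+1) : ℕ) : Polynomial ℝ) := by push_cast; ring
            _ = ((n + 1 : ℕ) : Polynomial ℝ) := by rw [h]
            _ = (n : Polynomial ℝ) + 1 := by push_cast; ring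
        rw [hc]
        simp only [derivative_mul, derivative_natCast, zero_mul]
        ring
      rw [Finset.sum_congr rfl step2, Finset.sum_add_distrib, ← Finset.mul_sum, ← Finset.mul_sum,
        ← derivative_sum, ih, hBrec n]
      have hd2 : derivative ((X : Polynomial ℝ)^2) = 2*X := by
        rw [derivative_X_pow]; norm_num [map_ofNat]
      simp only [derivative_mul, derivative_comp, add_comp, mul_comp, X_comp, one_comp,
        sub_comp, pow_comp, natCast_comp, ofNat_comp, derivative_X, derivative_one, hd2]
      ring

/-- Connection between the type `B` Eulerian polynomials `B_n` and the alternating run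
polynomials of dual Stirling permutations `F_n`: for all `n ≥ 0`,
`F_{n+1}(x) = x·B_n(x²) + n·x·F_n(x) − Σ_{r=2}^{n} C(n, r-2) F_{n-r+2}(−x) F_{r-1}(x)`. -/
theorem dual_stirling_typeB_eulerian (B : ℕ → Polynomial ℝ) (hB0 : B 0 = 1)
    (hBrec : ∀ n : ℕ, B (n + 1) =
      (2 * (n : Polynomial ℝ) * X + 1 + X) * B n + 2 * X * (1 - X) * derivative (B n))
    (F : ℕ → Polynomial ℝ) (hF0 : F 0 = 1)
    (hFrec : ∀ n : ℕ, F (n + 1) =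
      (X + 2 * (n : Polynomial ℝ) * X ^ 2) * F n + X * (1 - X ^ 2) * derivative (F n))
    (n : ℕ) :
    F (n + 1) = X * (B n).comp (X ^ 2) + (n : Polynomial ℝ) * X * F n -
      ∑ r ∈ Finset.Icc 2 n,
        (n.choose (r - 2) : Polynomial ℝ) * (F (n - r + 2)).comp (-X) * F (r - 1) := by
  have hF1 : F 1 = X := by rw [hFrec 0, hF0]; simp
  obtain _ | m := n
  · simp [hF0, hF1, hB0]
  · have hkey := key B hB0 hBrec F hF0 hFrec (m+1)
    rw [Finset.sum_range_succ, Finset.sum_range_succ] at hkey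
    rw [show m + 1 - m = 1 by omega] at hkey
    simp only [Nat.choose_self, Nat.cast_one, Nat.sub_self, Nat.add_sub_cancel,
      Nat.choose_succ_self_right, hF0, hF1, one_comp, X_comp] at hkey
    have hIcc : ∑ r ∈ Finset.Icc 2 (m+1),
        ((m+1).choose (r - 2) : Polynomial ℝ) * (F (m+1 - r + 2)).comp (-X) * F (r - 1)
        = ∑ k ∈ Finset.range m,
          ((m+1).choose k : Polynomial ℝ) * (F (m+1-k)).comp (-X) * F (k+1) := by
      rw [show Finset.Icc 2 (m+1) = Finset.Ico 2 (m+2) by rfl, Finset.sum_Ico_eq_sum_range]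
      apply Finset.sum_congr (by norm_num)
      intro i hi
      have hi' : i < m := Finset.mem_range.mp (by simpa using hi)
      have h1 : 2 + i - 2 = i := by omega
      have h2 : m + 1 - (2+i) + 2 = m + 1 - i := by omega
      have h3 : 2 + i - 1 = i + 1 := by omega
      rw [h1, h2, h3]
    rw [hIcc]
    push_cast at hkey ⊢
    linear_combination hkey
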